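/- Let n ≤ q, a_1,…,a_n distinct in F_q, v_1,…,v_n nonzero in F_q. Let P, Q ∈ F_q[x] with M = lcm(P,Q), gcd(P·Q, Π_{i=1}^n (x − a_i)) = 1, and deg M ≤ n. Then GRS(a, P, v) + GRS(a, Q, v) = GRS(a, M, v). -/

import Mathlib

open Polynomial

variable {F : Type*} [Field F] [Fintype F] [DecidableEq F]

/-- The generalized Reed--Solomon code with evaluation points `a`, column multipliers `v`
and polynomial `P`. -/
def GRSCode {n : ℕ} (a v : Fin n → F) (P : Polynomial F) : Set (Fin n → F) :=
  {c | ∃ f : Polynomial F, f.degree < P.degree ∧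
    c = fun i => v i * f.eval (a i) * (P.eval (a i))⁻¹}

omit [Fintype F] [DecidableEq F] in
lemma field_aux (v f g p q p' q' : F) (hp : p ≠ 0) (hq : q ≠ 0)
    (hp' : p' ≠ 0) (hq' : q' ≠ 0) (hpq : p * p' = q * q') :
    v * f * p⁻¹ + v * g * q⁻¹ = v * (f * p' + g * q') * (p * p')⁻¹ := by
  field_simp
  linear_combination v * g * hpq

omit [Fintype F] [DecidableEq F] in
lemma GRSCode_zero {n : ℕ} (a v : Fin n → F) : GRSCode a v (0 : Polynomial F) = ∅ := by
  ext x
  simp only [GRSCode, Set.mem_setOf_eq, Set.mem_empty_iff_false, iff_false, not_exists]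
  intro f hf
  simp only [degree_zero] at hf
  exact absurd hf.1 (not_lt_bot)

theorem GRSCode_sum {n : ℕ} (hn : n ≤ Fintype.card F)
    (a v : Fin n → F) (ha : Function.Injective a) (hv : ∀ i, v i ≠ 0)
    (P Q M : Polynomial F)
    (hlcm : lcm P Q = M)
    (hcop : IsCoprime (P * Q) (∏ i, (X - C (a i))))
    (hMdeg : M.natDegree ≤ n) :
    {x | ∃ c ∈ GRSCode a v P, ∃ d ∈ GRSCode a v Q, x = c + d} = GRSCode a v M := by
  by_cases hP0 : P = 0
  · have hM : M = 0 := by rw [← hlcm, hP0, lcm_zero_left]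
    subst hM
    rw [hP0, GRSCode_zero]
    ext x
    simp
  by_cases hQ0 : Q = 0
  · have hM : M = 0 := by rw [← hlcm, hQ0, lcm_zero_right]
    subst hM
    rw [hQ0, GRSCode_zero]
    ext x
    simp
  have hM0 : M ≠ 0 := by rw [← hlcm]; simp [lcm_eq_zero_iff, hP0, hQ0]
  obtain ⟨P', hPP'⟩ : P ∣ M := hlcm ▸ dvd_lcm_left P Q
  obtain ⟨Q', hQQ'⟩ : Q ∣ M := hlcm ▸ dvd_lcm_right P Q
  have hP'0 : P' ≠ 0 := by rintro rfl; exact hM0 (by simpa using hPP')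
  have hQ'0 : Q' ≠ 0 := by rintro rfl; exact hM0 (by simpa using hQQ')
  -- nonvanishing at the evaluation points
  obtain ⟨α, β, hαβ⟩ := hcop
  have hprod : ∀ i : Fin n, (∏ j, (X - C (a j))).eval (a i) = 0 := by
    intro i
    rw [eval_prod]
    exact Finset.prod_eq_zero (Finset.mem_univ i) (by simp)
  have hPQa : ∀ i, α.eval (a i) * (P.eval (a i) * Q.eval (a i)) = 1 := by
    intro i
    have := congrArg (eval (a i)) hαβ
    simpa [hprod i] using this
  have hPa : ∀ i, P.eval (a i) ≠ 0 := by
    intro i h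
    have := hPQa i
    rw [h] at this; simp at this
  have hQa : ∀ i, Q.eval (a i) ≠ 0 := by
    intro i h
    have := hPQa i
    rw [h] at this; simp at this
  have hMa : ∀ i, M.eval (a i) ≠ 0 := by
    intro i h
    obtain ⟨k, hk⟩ : M ∣ P * Q := by
      rw [← hlcm]; exact lcm_dvd (dvd_mul_right P Q) (dvd_mul_left Q P)
    have : P.eval (a i) * Q.eval (a i) = 0 := by
      rw [← eval_mul, hk, eval_mul, h, zero_mul]
    exact mul_ne_zero (hPa i) (hQa i) this
  have hP'a : ∀ i, P'.eval (a i) ≠ 0 := by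
    intro i h
    apply hMa i
    rw [hPP', eval_mul, h, mul_zero]
  have hQ'a : ∀ i, Q'.eval (a i) ≠ 0 := by
    intro i h
    apply hMa i
    rw [hQQ', eval_mul, h, mul_zero]
  have hMeval : ∀ i, M.eval (a i) = P.eval (a i) * P'.eval (a i) := by
    intro i; rw [hPP', eval_mul]
  have hMeval' : ∀ i, M.eval (a i) = Q.eval (a i) * Q'.eval (a i) := by
    intro i; rw [hQQ', eval_mul]
  -- coprimality of the cofactors
  have hcop' : IsCoprime P' Q' := by
    rw [← gcd_isUnit_iff]
    set d := gcd P' Q' with hd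
    obtain ⟨s, hs⟩ : d ∣ P' := gcd_dvd_left P' Q'
    obtain ⟨t, ht⟩ : d ∣ Q' := gcd_dvd_right P' Q'
    have hd0 : d ≠ 0 := by rintro h; rw [h, zero_mul] at hs; exact hP'0 hs
    have hPsQt : P * s = Q * t := by
      apply mul_right_cancel₀ hd0
      calc P * s * d = P * (d * s) := by ring
        _ = M := by rw [← hs, ← hPP']
        _ = Q * (d * t) := by rw [hQQ', ht]
        _ = Q * t * d := by ring
    obtain ⟨k, hk⟩ : M ∣ P * s := by
      rw [← hlcm]
      exact lcm_dvd (Dvd.intro s rfl) ⟨t, hPsQt⟩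
    have hMM : M * (k * d) = M * 1 := by
      rw [mul_one]
      calc M * (k * d) = (M * k) * d := by ring
        _ = (P * s) * d := by rw [← hk]
        _ = P * (d * s) := by ring
        _ = M := by rw [← hs, ← hPP']
    exact isUnit_iff_exists_inv.mpr ⟨k, by rw [mul_comm]; exact mul_left_cancel₀ hM0 hMM⟩
  -- degree facts
  have hdegM : M.degree = P.degree + P'.degree := by rw [hPP', degree_mul]
  have hdegM' : M.degree = Q.degree + Q'.degree := by rw [hQQ', degree_mul]
  have hdegPmul : ∀ f : Polynomial F, f.degree < P.degree → (f * P').degree < M.degree := by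
    intro f hf
    rw [degree_mul, hdegM]
    exact WithBot.add_lt_add_right (degree_ne_bot.mpr hP'0) hf
  have hdegQmul : ∀ g : Polynomial F, g.degree < Q.degree → (g * Q').degree < M.degree := by
    intro g hg
    rw [degree_mul, hdegM']
    exact WithBot.add_lt_add_right (degree_ne_bot.mpr hQ'0) hg
  ext x
  simp only [Set.mem_setOf_eq]
  constructor
  · rintro ⟨c, ⟨f, hf, rfl⟩, d, ⟨g, hg, rfl⟩, rfl⟩
    refine ⟨f * P' + g * Q', ?_, ?_⟩
    · exact lt_of_le_of_lt (degree_add_le _ _) (max_lt (hdegPmul f hf) (hdegQmul g hg))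
    · funext i
      simp only [Pi.add_apply, eval_add, eval_mul, hMeval i]
      exact field_aux _ _ _ _ _ _ _ (hPa i) (hQa i) (hP'a i) (hQ'a i) (by rw [← hMeval i, hMeval' i])
  · rintro ⟨e, he, rfl⟩
    -- Bezout: u * P' + w * Q' = 1
    obtain ⟨u, w, huw⟩ := hcop'
    -- f := (e * u) % P, deg f < deg P
    set f : Polynomial F := (e * u) % P with hfdef
    have hdiv : P * ((e * u) / P) + (e * u) % P = e * u := EuclideanDomain.div_add_mod (e * u) P
    have hf : f.degree < P.degree := EuclideanDomain.mod_lt _ hP0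
    set g : Polynomial F := ((e * u) / P) * Q + e * w with hgdef
    have hkey : e = f * P' + g * Q' := by
      calc e = e * u * P' + e * w * Q' := by linear_combination -e * huw
        _ = (P * ((e * u) / P) + f) * P' + e * w * Q' := by rw [hfdef, hdiv]
        _ = f * P' + ((e * u) / P) * (P * P') + e * w * Q' := by ring
        _ = f * P' + ((e * u) / P) * (Q * Q') + e * w * Q' := by rw [← hPP', hQQ']
        _ = f * P' + g * Q' := by rw [hgdef]; ring
    have hg : g.degree < Q.degree := by
      by_cases hg0 : g = 0
      · rw [hg0, degree_zero]
        exact (degree_ne_bot.mpr hQ0).bot_lt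
      · have h2 : (g * Q').degree < M.degree := by
          have : g * Q' = e - f * P' := by rw [hkey]; ring
          rw [this]
          exact lt_of_le_of_lt (degree_sub_le _ _)
            (max_lt he (hdegPmul f hf))
        rw [degree_mul, hdegM'] at h2
        exact lt_of_add_lt_add_right h2
    refine ⟨fun i => v i * f.eval (a i) * (P.eval (a i))⁻¹, ⟨f, hf, rfl⟩,
      fun i => v i * g.eval (a i) * (Q.eval (a i))⁻¹, ⟨g, hg, rfl⟩, ?_⟩
    funext i
    simp only [Pi.add_apply]
    rw [hkey]
    simp only [eval_add, eval_mul, hMeval i]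
    exact (field_aux _ _ _ _ _ _ _ (hPa i) (hQa i) (hP'a i) (hQ'a i) (by rw [← hMeval i, hMeval' i])).symm
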